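/- Let f be proper lsc convex and h ∈ H(∂f) with h ≤ f^{FY}. Then for all ε > 0 and x, the enlargement T̆_h(ε/2, x) is contained in the ε-subdifferential: T̆_h(ε/2, x) ⊆ ∂_ε f(x). -/

import Mathlib

open NormedSpace

noncomputable section

/-- Convexity for extended-real-valued functions. -/
def EConvexOn {E : Type*} [AddCommMonoid E] [Module ℝ E] (f : E → EReal) : Prop :=
  ∀ x y : E, ∀ a b : ℝ, 0 ≤ a → 0 ≤ b → a + b = 1 →
    f (a • x + b • y) ≤ (a : EReal) * f x + (b : EReal) * f y

/-- Properness: somewhere finite and never `⊥` (i.e. values in `ℝ ∪ {+∞}`). -/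
def EProper {E : Type*} (f : E → EReal) : Prop :=
  (∃ x, f x ≠ ⊤) ∧ ∀ x, f x ≠ ⊥

variable {X : Type*} [NormedAddCommGroup X] [NormedSpace ℝ X]

/-- The ε-subdifferential of `f : X → ℝ ∪ {+∞}` at `x`. -/
def epsSubdiff (f : X → EReal) (ε : ℝ) (x : X) : Set (StrongDual ℝ X) :=
  {p | f x ≠ ⊤ ∧ ∀ y : X, f x + ((p (y - x) : ℝ) : EReal) ≤ f y + (ε : EReal)}

/-- The Fenchel conjugate of `f : X → ℝ ∪ {+∞}`. -/
def fconj (f : X → EReal) (p : StrongDual ℝ X) : EReal :=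
  ⨆ y : X, ((p y : ℝ) : EReal) - f y

/-- The duality pairing `⟨x, x*⟩` on `X × X*`. -/
def pairing (z : X × StrongDual ℝ X) : ℝ := z.2 z.1

/-- `h* ∘ i`, the conjugate of `h : X × X* → ℝ ∪ {+∞}` with respect to the pairing
`⟨(x,x*),(y*,y)⟩ = ⟨x,y*⟩ + ⟨y,x*⟩`, composed with the swap `i(x,x*) = (x*,x)`. -/
def conjI (h : X × StrongDual ℝ X → EReal) (z : X × StrongDual ℝ X) : EReal :=
  ⨆ w : X × StrongDual ℝ X, ((z.2 w.1 + w.2 z.1 : ℝ) : EReal) - h w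

/-- The averaging map `A h := (1/2)(h + h* ∘ i)`. -/
def Amap (h : X × StrongDual ℝ X → EReal) : X × StrongDual ℝ X → EReal :=
  fun z => (((1 : ℝ)/2 : ℝ) : EReal) * (h z + conjI h z)

/-- Monotone multivalued operator `T : X ⇉ X*`. -/
def IsMonotoneOp (T : X → Set (StrongDual ℝ X)) : Prop :=
  ∀ ⦃x p y q⦄, p ∈ T x → q ∈ T y → 0 ≤ (p - q) (x - y)

/-- Maximally monotone operator. -/
def IsMaxMonotoneOp (T : X → Set (StrongDual ℝ X)) : Prop :=
  IsMonotoneOp T ∧ ∀ x p, (∀ y q, q ∈ T y → 0 ≤ (p - q) (x - y)) → p ∈ T x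

/-- The Fitzpatrick family `H(T)`: lsc convex `h ≥ ⟨·,·⟩` with equality on `gph T`. -/
def InFitzFamily (T : X → Set (StrongDual ℝ X)) (h : X × StrongDual ℝ X → EReal) : Prop :=
  LowerSemicontinuous h ∧ EConvexOn h ∧ (∀ z, (pairing z : EReal) ≤ h z) ∧
    ∀ x p, p ∈ T x → h (x, p) = (pairing (x, p) : EReal)

/-- The δ-subdifferential of `h : X × X* → ℝ ∪ {+∞}` with respect to the pairing
`⟨(x,x*),(y*,y)⟩ = ⟨x,y*⟩ + ⟨y,x*⟩`. -/
def epsSubdiff2 (h : X × StrongDual ℝ X → EReal) (δ : ℝ) (z : X × StrongDual ℝ X) :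
    Set (StrongDual ℝ X × X) :=
  {w | h z ≠ ⊤ ∧ ∀ u : X × StrongDual ℝ X,
    h z + ((w.1 (u.1 - z.1) + (u.2 - z.2) w.2 : ℝ) : EReal) ≤ h u + (δ : EReal)}

/-- The Fenchel–Young function `f^{FY}(x,x*) = f(x) + f*(x*)`. -/
def FYfn (f : X → EReal) (z : X × StrongDual ℝ X) : EReal := f z.1 + fconj f z.2

section Aux

variable (f : X → EReal)

lemma epiSet_closed (hlsc : LowerSemicontinuous f) :
    IsClosed {z : X × ℝ | f z.1 ≤ (z.2 : EReal)} := by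
  rw [← isOpen_compl_iff, isOpen_iff_mem_nhds]
  rintro ⟨y, t⟩ hz
  simp only [Set.mem_compl_iff, Set.mem_setOf_eq, not_le] at hz
  obtain ⟨c, htc, hcf⟩ := EReal.exists_between_coe_real hz
  have htc' : t < c := by exact_mod_cast htc
  have h1 : ∀ᶠ q : X × ℝ in nhds (y, t), (c : EReal) < f q.1 :=
    (continuous_fst.tendsto (y, t)).eventually (hlsc y c hcf)
  have h2 : ∀ᶠ q : X × ℝ in nhds (y, t), q.2 < c :=
    (continuous_snd.tendsto (y, t)).eventually (gt_mem_nhds htc')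
  filter_upwards [h1, h2] with q hq1 hq2
  simp only [Set.mem_compl_iff, Set.mem_setOf_eq, not_le]
  exact lt_trans (by exact_mod_cast hq2) hq1

lemma epiSet_convex (hproper : EProper f) (hconv : EConvexOn f) :
    Convex ℝ {z : X × ℝ | f z.1 ≤ (z.2 : EReal)} := by
  rintro ⟨y1, t1⟩ h1 ⟨y2, t2⟩ h2 a b ha hb hab
  simp only [Set.mem_setOf_eq] at h1 h2 ⊢
  have hb1 : f y1 ≠ ⊥ := hproper.2 y1
  have hb2 : f y2 ≠ ⊥ := hproper.2 y2
  have ht1 : f y1 ≠ ⊤ := fun hh => by simp [hh] at h1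
  have ht2 : f y2 ≠ ⊤ := fun hh => by simp [hh] at h2
  set s1 := (f y1).toReal with hs1
  set s2 := (f y2).toReal with hs2
  have hf1 : f y1 = (s1 : EReal) := (EReal.coe_toReal ht1 hb1).symm
  have hf2 : f y2 = (s2 : EReal) := (EReal.coe_toReal ht2 hb2).symm
  have hs1t : s1 ≤ t1 := by rw [hf1] at h1; exact_mod_cast h1
  have hs2t : s2 ≤ t2 := by rw [hf2] at h2; exact_mod_cast h2
  have hcv := hconv y1 y2 a b ha hb hab
  rw [hf1, hf2] at hcv
  calc f (a • y1 + b • y2) ≤ (a : EReal) * (s1 : EReal) + (b : EReal) * (s2 : EReal) := hcv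
    _ = ((a * s1 + b * s2 : ℝ) : EReal) := by
        rw [← EReal.coe_mul, ← EReal.coe_mul, ← EReal.coe_add]
    _ ≤ ((a * t1 + b * t2 : ℝ) : EReal) := by
        apply EReal.coe_le_coe_iff.2
        have h1' := mul_le_mul_of_nonneg_left hs1t ha
        have h2' := mul_le_mul_of_nonneg_left hs2t hb
        linarith

/-- Core separation of a point below the graph from the epigraph. -/
lemma epi_sep (hproper : EProper f) (hconv : EConvexOn f) (hlsc : LowerSemicontinuous f)
    (x : X) (r : ℝ) (hr : (r : EReal) < f x) :
    ∃ (q : StrongDual ℝ X) (s u : ℝ), s ≤ 0 ∧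
      (∀ (y : X) (t : ℝ), f y ≤ (t : EReal) → q y + s * t < u) ∧ u < q x + s * r := by
  have hx : (x, r) ∉ {z : X × ℝ | f z.1 ≤ (z.2 : EReal)} := by
    simp only [Set.mem_setOf_eq, not_le]; exact hr
  obtain ⟨g, u, hgS, hgx⟩ := geometric_hahn_banach_closed_point
    (epiSet_convex f hproper hconv) (epiSet_closed f hlsc) hx
  set q : StrongDual ℝ X := g.comp (ContinuousLinearMap.inl ℝ X ℝ) with hq
  set s : ℝ := g (0, 1) with hsdef
  have hdecomp : ∀ (y : X) (t : ℝ), g (y, t) = q y + s * t := by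
    intro y t
    have hsplit : (y, t) = (y, (0 : ℝ)) + t • ((0 : X), (1 : ℝ)) := by
      simp [Prod.ext_iff]
    have e1 : g (y, (0 : ℝ)) = q y := rfl
    have e2 : g (t • ((0 : X), (1 : ℝ))) = t * s := by rw [map_smul, smul_eq_mul]
    rw [hsplit, map_add, e1, e2]; ring
  have hmem : ∀ (y : X) (t : ℝ), f y ≤ (t : EReal) → q y + s * t < u := by
    intro y t hyt
    have := hgS (y, t) hyt
    rwa [hdecomp] at this
  have hxr : u < q x + s * r := by rw [← hdecomp]; exact hgx
  refine ⟨q, s, u, ?_, hmem, hxr⟩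
  obtain ⟨x0, hx0⟩ := hproper.1
  have hb0 : f x0 ≠ ⊥ := hproper.2 x0
  set m := (f x0).toReal with hm
  have hf0 : f x0 = (m : EReal) := (EReal.coe_toReal hx0 hb0).symm
  by_contra hs
  push_neg at hs
  set t0 : ℝ := max m ((u - q x0) / s + 1) with ht0
  have h1 : f x0 ≤ (t0 : EReal) := by
    rw [hf0]; exact_mod_cast le_max_left _ _
  have h2 := hmem x0 t0 h1
  have h3 : (u - q x0) / s + 1 ≤ t0 := le_max_right _ _
  have h4 : u - q x0 + s ≤ s * t0 := by
    have h5 := mul_le_mul_of_nonneg_left h3 hs.le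
    calc u - q x0 + s = s * ((u - q x0) / s + 1) := by field_simp
      _ ≤ s * t0 := h5
  linarith

lemma fconj_le_of_bound (hproper : EProper f) (q : StrongDual ℝ X) (c : ℝ)
    (hb : ∀ y, f y ≠ ⊤ → q y - (f y).toReal ≤ c) : fconj f q ≤ (c : EReal) := by
  refine iSup_le fun y => ?_
  by_cases hy : f y = ⊤
  · rw [hy, EReal.sub_top]
    exact bot_le
  · have hyb : f y ≠ ⊥ := hproper.2 y
    have hfy : f y = ((f y).toReal : EReal) := (EReal.coe_toReal hy hyb).symm
    rw [hfy, ← EReal.coe_sub]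
    exact_mod_cast hb y hy

lemma bound_of_fconj_le (q : StrongDual ℝ X) (c : ℝ) (hc : fconj f q ≤ (c : EReal)) :
    ∀ y, f y ≠ ⊤ → f y ≠ ⊥ → q y - (f y).toReal ≤ c := by
  intro y hy hyb
  have h1 : ((q y : ℝ) : EReal) - f y ≤ fconj f q :=
    le_iSup (fun y => ((q y : ℝ) : EReal) - f y) y
  have hfy : f y = ((f y).toReal : EReal) := (EReal.coe_toReal hy hyb).symm
  rw [hfy, ← EReal.coe_sub] at h1
  exact_mod_cast h1.trans hc

lemma fconj_ne_bot (hproper : EProper f) (q : StrongDual ℝ X) : fconj f q ≠ ⊥ := by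
  obtain ⟨x0, hx0⟩ := hproper.1
  have hb0 : f x0 ≠ ⊥ := hproper.2 x0
  have hf0 : f x0 = ((f x0).toReal : EReal) := (EReal.coe_toReal hx0 hb0).symm
  have h1 : ((q x0 : ℝ) : EReal) - f x0 ≤ fconj f q :=
    le_iSup (fun y => ((q y : ℝ) : EReal) - f y) x0
  rw [hf0, ← EReal.coe_sub] at h1
  intro hc
  rw [hc, le_bot_iff] at h1
  exact EReal.coe_ne_bot _ h1

lemma fM_of_neg (hproper : EProper f) (x : X) (r : ℝ) (q : StrongDual ℝ X) (s u : ℝ) (hs : s < 0)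
    (hmem : ∀ (y : X) (t : ℝ), f y ≤ (t : EReal) → q y + s * t < u)
    (hxr : u < q x + s * r) :
    ∃ p : StrongDual ℝ X, fconj f p ≤ ((u / (-s) : ℝ) : EReal) ∧
      (r : EReal) < ((p x : ℝ) : EReal) - fconj f p := by
  set σ : ℝ := -s with hσ
  have hσpos : 0 < σ := by simp only [hσ]; linarith
  set p : StrongDual ℝ X := σ⁻¹ • q with hp
  have hpy : ∀ y : X, p y = σ⁻¹ * q y := fun y => rfl
  have hconj : fconj f p ≤ ((u / σ : ℝ) : EReal) := by
    apply fconj_le_of_bound f hproper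
    intro y hy
    have hyb : f y ≠ ⊥ := hproper.2 y
    have hfy : f y ≤ (((f y).toReal : ℝ) : EReal) := by
      rw [EReal.coe_toReal hy hyb]
    have hky := hmem y ((f y).toReal) hfy
    have hinv : 0 < σ⁻¹ := inv_pos.2 hσpos
    have hσne : σ ≠ 0 := ne_of_gt hσpos
    have h9 : σ⁻¹ * s = -1 := by
      have hsσ : s = -σ := by rw [hσ]; ring
      rw [hsσ]
      field_simp
    have h8 : σ⁻¹ * (q y + s * (f y).toReal) < σ⁻¹ * u :=
      mul_lt_mul_of_pos_left hky hinv
    have hexp : σ⁻¹ * (q y + s * (f y).toReal)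
        = σ⁻¹ * q y + (σ⁻¹ * s) * (f y).toReal := by ring
    rw [hexp, h9] at h8
    rw [hpy, div_eq_mul_inv, mul_comm u σ⁻¹]
    linarith
  refine ⟨p, hconj, ?_⟩
  have hrlt : r < p x - u / σ := by
    have hinv : 0 < σ⁻¹ := inv_pos.2 hσpos
    have hσne : σ ≠ 0 := ne_of_gt hσpos
    have h9 : σ⁻¹ * s = -1 := by
      have hsσ : s = -σ := by rw [hσ]; ring
      rw [hsσ]
      field_simp
    have h8 : σ⁻¹ * u < σ⁻¹ * (q x + s * r) := mul_lt_mul_of_pos_left hxr hinv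
    have hexp : σ⁻¹ * (q x + s * r) = σ⁻¹ * q x + (σ⁻¹ * s) * r := by ring
    rw [hexp, h9] at h8
    rw [hpy, div_eq_mul_inv, mul_comm u σ⁻¹]
    linarith
  calc (r : EReal) < ((p x - u / σ : ℝ) : EReal) := by exact_mod_cast hrlt
    _ = ((p x : ℝ) : EReal) - ((u / σ : ℝ) : EReal) := by rw [EReal.coe_sub]
    _ ≤ ((p x : ℝ) : EReal) - fconj f p := EReal.sub_le_sub le_rfl hconj

lemma exists_fconj_bound (hproper : EProper f) (hconv : EConvexOn f)
    (hlsc : LowerSemicontinuous f) :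
    ∃ (p0 : StrongDual ℝ X) (c0 : ℝ), fconj f p0 ≤ (c0 : EReal) := by
  obtain ⟨x0, hx0⟩ := hproper.1
  have hb0 : f x0 ≠ ⊥ := hproper.2 x0
  set m := (f x0).toReal with hm
  have hf0 : f x0 = (m : EReal) := (EReal.coe_toReal hx0 hb0).symm
  have hr0 : ((m - 1 : ℝ) : EReal) < f x0 := by
    rw [hf0]; exact_mod_cast sub_one_lt m
  obtain ⟨q, s, u, hs, hmem, hxr⟩ := epi_sep f hproper hconv hlsc x0 (m - 1) hr0
  rcases lt_or_eq_of_le hs with hslt | hseq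
  · obtain ⟨p, hpb, _⟩ := fM_of_neg f hproper x0 (m - 1) q s u hslt hmem hxr
    exact ⟨p, u / (-s), hpb⟩
  · exfalso
    have h1 := hmem x0 m (le_of_eq hf0)
    rw [hseq] at hxr h1
    simp only [zero_mul, add_zero] at hxr h1
    linarith

/-- Fenchel–Moreau, pointwise form. -/
lemma fenchel_moreau (hproper : EProper f) (hconv : EConvexOn f) (hlsc : LowerSemicontinuous f)
    (x : X) (r : ℝ) (hr : (r : EReal) < f x) :
    ∃ p : StrongDual ℝ X, (r : EReal) < ((p x : ℝ) : EReal) - fconj f p := by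
  obtain ⟨q, s, u, hs, hmem, hxr⟩ := epi_sep f hproper hconv hlsc x r hr
  rcases lt_or_eq_of_le hs with hslt | hseq
  · obtain ⟨p, _, hp⟩ := fM_of_neg f hproper x r q s u hslt hmem hxr
    exact ⟨p, hp⟩
  · -- s = 0 : horizontal separating hyperplane
    subst hseq
    have hmem' : ∀ y : X, f y ≠ ⊤ → q y < u := by
      intro y hy
      have hyb : f y ≠ ⊥ := hproper.2 y
      have hfy : f y ≤ (((f y).toReal : ℝ) : EReal) := by
        rw [EReal.coe_toReal hy hyb]
      have hq := hmem y ((f y).toReal) hfy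
      simp only [zero_mul, add_zero] at hq
      exact hq
    have hxr' : u < q x := by
      simp only [zero_mul, add_zero] at hxr
      exact hxr
    obtain ⟨p0, c0, hp0⟩ := exists_fconj_bound f hproper hconv hlsc
    set d : ℝ := q x - u with hd
    have hdpos : 0 < d := by simp only [hd]; linarith
    set c : ℝ := max 0 ((r - p0 x + c0) / d + 1) with hc
    have hc0 : 0 ≤ c := le_max_left _ _
    set p : StrongDual ℝ X := p0 + c • q with hp
    have hpy : ∀ y : X, p y = p0 y + c * q y := by intro y; simp [hp]
    have hconjp : fconj f p ≤ ((c0 + c * u : ℝ) : EReal) := by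
      apply fconj_le_of_bound f hproper
      intro y hy
      have hyb : f y ≠ ⊥ := hproper.2 y
      have h1 := bound_of_fconj_le f p0 c0 hp0 y hy hyb
      have h2 := hmem' y hy
      have h3 : c * q y ≤ c * u := mul_le_mul_of_nonneg_left h2.le hc0
      rw [hpy]; linarith
    have hrlt : r < p x - (c0 + c * u) := by
      have h4 : (r - p0 x + c0) / d + 1 ≤ c := le_max_right _ _
      have h5 : ((r - p0 x + c0) / d + 1) * d ≤ c * d :=
        mul_le_mul_of_nonneg_right h4 hdpos.le
      have h6 : ((r - p0 x + c0) / d + 1) * d = r - p0 x + c0 + d := by field_simp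
      rw [hpy]
      have h7 : c * q x = c * u + c * d := by rw [hd]; ring
      nlinarith
    refine ⟨p, ?_⟩
    calc (r : EReal) < ((p x - (c0 + c * u) : ℝ) : EReal) := by exact_mod_cast hrlt
      _ = ((p x : ℝ) : EReal) - ((c0 + c * u : ℝ) : EReal) := by rw [EReal.coe_sub]
      _ ≤ ((p x : ℝ) : EReal) - fconj f p := EReal.sub_le_sub le_rfl hconjp

lemma key_ineq (hproper : EProper f) (hconv : EConvexOn f) (hlsc : LowerSemicontinuous f)
    (h : X × StrongDual ℝ X → EReal) (hle : ∀ z, h z ≤ FYfn f z) (x : X) (p : StrongDual ℝ X) :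
    f x + fconj f p ≤ conjI h (x, p) := by
  apply EReal.add_le_of_forall_lt
  intro a' ha' b' hb'
  obtain ⟨r, har, hrf⟩ := EReal.exists_between_coe_real ha'
  obtain ⟨q, hq⟩ := fenchel_moreau f hproper hconv hlsc x r hrf
  have hb'' : b' < ⨆ y : X, ((p y : ℝ) : EReal) - f y := hb'
  obtain ⟨y, hy⟩ := lt_iSup_iff.1 hb''
  have hstep : (((q x : ℝ) : EReal) - fconj f q) + (((p y : ℝ) : EReal) - f y) ≤
      ((p y + q x : ℝ) : EReal) - (f y + fconj f q) := by
    rcases eq_or_ne (f y) ⊤ with hA | hA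
    · rw [hA, EReal.sub_top, EReal.add_bot]; exact bot_le
    · rcases eq_or_ne (fconj f q) ⊤ with hB | hB
      · rw [hB, EReal.sub_top, EReal.bot_add]; exact bot_le
      · have hAb : f y ≠ ⊥ := hproper.2 y
        have hBb : fconj f q ≠ ⊥ := fconj_ne_bot f hproper q
        have hA' : f y = ((f y).toReal : EReal) := (EReal.coe_toReal hA hAb).symm
        have hB' : fconj f q = (((fconj f q).toReal : ℝ) : EReal) :=
          (EReal.coe_toReal hB hBb).symm
        rw [hA', hB', ← EReal.coe_sub, ← EReal.coe_sub, ← EReal.coe_add, ← EReal.coe_add,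
          ← EReal.coe_sub]
        apply EReal.coe_le_coe_iff.2
        apply le_of_eq; ring
  calc a' + b' ≤ (((q x : ℝ) : EReal) - fconj f q) + (((p y : ℝ) : EReal) - f y) :=
        add_le_add ((har.trans hq).le) hy.le
    _ ≤ ((p y + q x : ℝ) : EReal) - (f y + fconj f q) := hstep
    _ ≤ ((p y + q x : ℝ) : EReal) - h (y, q) := EReal.sub_le_sub le_rfl (hle (y, q))
    _ ≤ conjI h (x, p) :=
        le_iSup (fun w : X × StrongDual ℝ X => ((p w.1 + w.2 x : ℝ) : EReal) - h w) ((y, q))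

end Aux

/-- if `h ∈ H(∂f)` and `h ≤ f^{FY}`, then
`T̆_h(ε/2, x) ⊆ ∂_ε f(x)` for every `ε > 0`. -/
theorem statement19 (f : X → EReal) (hproper : EProper f)
    (hconv : EConvexOn f) (hlsc : LowerSemicontinuous f)
    (h : X × StrongDual ℝ X → EReal)
    (hF : InFitzFamily (fun x => epsSubdiff f 0 x) h)
    (hle : ∀ z, h z ≤ FYfn f z) :
    ∀ ε : ℝ, 0 < ε → ∀ x : X, ∀ p : StrongDual ℝ X,
      Amap h (x, p) ≤ ((p x + ε / 2 : ℝ) : EReal) → p ∈ epsSubdiff f ε x := by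
  intro ε hε x p hA
  have hpair : ((p x : ℝ) : EReal) ≤ h (x, p) := hF.2.2.1 (x, p)
  have hkey : f x + fconj f p ≤ conjI h (x, p) :=
    key_ineq f hproper hconv hlsc h hle x p
  have hsum : ((p x : ℝ) : EReal) + (f x + fconj f p) ≤ h (x, p) + conjI h (x, p) :=
    add_le_add hpair hkey
  have hS : h (x, p) + conjI h (x, p) ≤ ((2 * p x + ε : ℝ) : EReal) := by
    have e0 : (2 : EReal) * (((1 : ℝ)/2 : ℝ) : EReal) = (1 : EReal) := by
      rw [show (2 : EReal) = ((2 : ℝ) : EReal) by norm_cast, ← EReal.coe_mul]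
      norm_num
    have e1 : (2 : EReal) * Amap h (x, p) = h (x, p) + conjI h (x, p) := by
      rw [Amap, ← mul_assoc, e0, one_mul]
    have h2 : (2 : EReal) * Amap h (x, p) ≤ (2 : EReal) * ((p x + ε / 2 : ℝ) : EReal) :=
      mul_le_mul_of_nonneg_left hA (by norm_num)
    rw [e1] at h2
    calc h (x, p) + conjI h (x, p) ≤ (2 : EReal) * ((p x + ε / 2 : ℝ) : EReal) := h2
      _ = ((2 * p x + ε : ℝ) : EReal) := by
          rw [show (2 : EReal) = ((2 : ℝ) : EReal) by norm_cast, ← EReal.coe_mul,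
            EReal.coe_eq_coe_iff]
          ring
  have h3 : f x + fconj f p ≤ ((p x + ε : ℝ) : EReal) := by
    apply (EReal.addLECancellable_coe (p x))
    calc ((p x : ℝ) : EReal) + (f x + fconj f p) ≤ ((2 * p x + ε : ℝ) : EReal) :=
          hsum.trans hS
      _ = ((p x : ℝ) : EReal) + ((p x + ε : ℝ) : EReal) := by
          rw [← EReal.coe_add]; ring_nf
  have hfb : fconj f p ≠ ⊥ := fconj_ne_bot f hproper p
  have hfx_top : f x ≠ ⊤ := by
    intro hfx
    rw [hfx, EReal.top_add_of_ne_bot hfb] at h3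
    exact EReal.coe_ne_top _ (top_le_iff.1 h3)
  have hfx_bot : f x ≠ ⊥ := hproper.2 x
  set m := (f x).toReal with hm
  have hfm : f x = (m : EReal) := (EReal.coe_toReal hfx_top hfx_bot).symm
  have h4 : fconj f p ≤ ((p x + ε - m : ℝ) : EReal) := by
    apply (EReal.addLECancellable_coe m)
    calc ((m : ℝ) : EReal) + fconj f p = f x + fconj f p := by rw [hfm]
      _ ≤ ((p x + ε : ℝ) : EReal) := h3
      _ = ((m : ℝ) : EReal) + ((p x + ε - m : ℝ) : EReal) := by
          rw [← EReal.coe_add]; ring_nf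
  refine ⟨hfx_top, fun y => ?_⟩
  by_cases hy : f y = ⊤
  · rw [hy, EReal.top_add_coe]; exact le_top
  · have hyb : f y ≠ ⊥ := hproper.2 y
    set n := (f y).toReal with hn
    have hfn : f y = (n : EReal) := (EReal.coe_toReal hy hyb).symm
    have h5 : ((p y : ℝ) : EReal) - f y ≤ fconj f p :=
      le_iSup (fun y => ((p y : ℝ) : EReal) - f y) y
    rw [hfn, ← EReal.coe_sub] at h5
    have h6 : p y - n ≤ p x + ε - m := by exact_mod_cast h5.trans h4
    rw [hfm, hfn, map_sub, ← EReal.coe_add, ← EReal.coe_add]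
    apply EReal.coe_le_coe_iff.2
    linarith
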